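/- In a restriction category with restriction coproducts and restriction zero, decisions can be conjugated by restriction inverses: if h : A → A + A is a decision and f : A → B has restriction inverse g : B → A, then (f + f) ∘ h ∘ g : B → B + B is a decision, and moreover overline{(g+g) h f} = overline{h f}. -/

import Mathlib

open CategoryTheory CategoryTheory.Limits

universe v u

/-- A restriction category: a category with an operation assigning to each
morphism `f : A ⟶ B` a morphism `ρ f : A ⟶ A` satisfying axioms R.1–R.4.
(Composition is written diagrammatically: `f ≫ g` is "first `f`, then `g`",
so the paper's `g ∘ f` is `f ≫ g`.) -/
class RestrictionCategory (C : Type u) [Category.{v} C] where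
  ρ : ∀ {A B : C}, (A ⟶ B) → (A ⟶ A)
  R1 : ∀ {A B : C} (f : A ⟶ B), ρ f ≫ f = f
  R2 : ∀ {A B D : C} (f : A ⟶ B) (g : A ⟶ D), ρ f ≫ ρ g = ρ g ≫ ρ f
  R3 : ∀ {A B D : C} (f : A ⟶ B) (g : A ⟶ D), ρ (ρ f ≫ g) = ρ f ≫ ρ g
  R4 : ∀ {A B D : C} (f : A ⟶ B) (g : B ⟶ D), f ≫ ρ g = ρ (f ≫ g) ≫ f

open RestrictionCategory

open ZeroObject

variable {C : Type u} [Category.{v} C] [RestrictionCategory C]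
  [HasBinaryCoproducts C] [HasZeroObject C] [HasZeroMorphisms C]

/-- The restriction retraction `⟨1|0⟩ : A ⨿ B ⟶ A` of the first injection. -/
noncomputable def iStar (A B : C) : (A ⨿ B) ⟶ A := coprod.desc (𝟙 A) 0

/-- The restriction retraction `⟨0|1⟩ : A ⨿ B ⟶ B` of the second injection. -/
noncomputable def jStar (A B : C) : (A ⨿ B) ⟶ B := coprod.desc 0 (𝟙 B)

/-- `h : A ⟶ A ⨿ A` is a decision for `f : A ⟶ B ⨿ D` if it is restriction
inverse to `⟨overline{i* f} | overline{j* f}⟩ : A ⨿ A ⟶ A` and `ρ h = ρ f`. -/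
def IsDecision {A B D : C} (f : A ⟶ B ⨿ D) (h : A ⟶ A ⨿ A) : Prop :=
  coprod.desc (ρ (f ≫ iStar B D)) (ρ (f ≫ jStar B D)) ≫ h =
    ρ (coprod.desc (ρ (f ≫ iStar B D)) (ρ (f ≫ jStar B D))) ∧
  h ≫ coprod.desc (ρ (f ≫ iStar B D)) (ρ (f ≫ jStar B D)) = ρ h ∧
  ρ h = ρ f


section Aux

open RestrictionCategory

variable {C : Type u} [Category.{v} C] [RestrictionCategory C]

lemma rid {A : C} : ρ (𝟙 A) = 𝟙 A := by
  have := R1 (𝟙 A); simpa using this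

lemma rr {A B : C} (f : A ⟶ B) : ρ (ρ f) = ρ f := by
  have := R3 f (𝟙 A); simpa [rid] using this

lemma rle {A B D : C} (f : A ⟶ B) (g : B ⟶ D) : ρ (f ≫ g) ≫ ρ f = ρ (f ≫ g) := by
  rw [R2]
  have h := R3 f (f ≫ g)
  rw [← h, ← Category.assoc, R1]

lemma rcr {A B D : C} (f : A ⟶ B) (g : B ⟶ D) : ρ (f ≫ ρ g) = ρ (f ≫ g) := by
  rw [R4, R3]
  exact rle f g

lemma rdesc [HasBinaryCoproducts C] {A B D : C} (x : A ⟶ D) (y : B ⟶ D) :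
    ρ (coprod.desc x y) = coprod.map (ρ x) (ρ y) := by
  apply coprod.hom_ext
  · rw [R4, coprod.inl_desc, coprod.inl_map]
  · rw [R4, coprod.inr_desc, coprod.inr_map]

end Aux

/-- Decisions can be conjugated by restriction inverses: if `h : A ⟶ A ⨿ A`
is a decision and `f : A ⟶ B` has restriction inverse `g : B ⟶ A`, then the
conjugate `(f + f) ∘ h ∘ g : B ⟶ B ⨿ B` is a decision, and moreover
`overline{(f + f) ∘ h ∘ g} = overline{h ∘ g}` (the restriction of the
conjugate of `h` agrees with that of `h` composed with the inverse). -/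
theorem stmt_12
    (htot : ∀ A B : C, ρ (coprod.inl : A ⟶ A ⨿ B) = 𝟙 A ∧
      ρ (coprod.inr : B ⟶ A ⨿ B) = 𝟙 B)
    (hzero : ∀ A : C, ρ (0 : A ⟶ A) = (0 : A ⟶ A))
    {A B : C} (h : A ⟶ A ⨿ A) (hdec : IsDecision h h)
    (f : A ⟶ B) (g : B ⟶ A)
    (hgf : f ≫ g = ρ f) (hfg : g ≫ f = ρ g) :
    IsDecision (g ≫ h ≫ coprod.map f f) (g ≫ h ≫ coprod.map f f) ∧
    ρ (g ≫ h ≫ coprod.map f f) = ρ (g ≫ h) := by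
  obtain ⟨hd1, hd2, -⟩ := hdec
  set hi := ρ (h ≫ iStar A A) with hi_def
  set hj := ρ (h ≫ jStar A A) with hj_def
  set d := coprod.desc hi hj with d_def
  have rhi : ρ hi = hi := rr _
  have rhj : ρ hj = hj := rr _
  have ge : g ≫ ρ f = g := by
    rw [← hgf, ← Category.assoc, hfg, R1]
  have rhod : ρ d = coprod.map hi hj := by rw [d_def, rdesc, rhi, rhj]
  have hdh : d ≫ h = coprod.map hi hj := by rw [hd1, rhod]
  have hih : hi ≫ h = hi ≫ coprod.inl := by
    have := congrArg (fun t => coprod.inl ≫ t) hdh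
    simp only [d_def, coprod.inl_desc_assoc, coprod.inl_map] at this; exact this
  have hjh : hj ≫ h = hj ≫ coprod.inr := by
    have := congrArg (fun t => coprod.inr ≫ t) hdh
    simp only [d_def, coprod.inr_desc_assoc, coprod.inr_map] at this; exact this
  have hself : h ≫ coprod.map hi hj = h := by
    rw [← hdh, ← Category.assoc, hd2, R1]
  have ce_hi : hi ≫ ρ f = ρ f ≫ hi := R2 _ f
  have ce_hj : hj ≫ ρ f = ρ f ≫ hj := R2 _ f
  have M : coprod.map (hi ≫ ρ f) (hj ≫ ρ f) = d ≫ ρ f ≫ h := by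
    apply coprod.hom_ext
    · calc coprod.inl ≫ coprod.map (hi ≫ ρ f) (hj ≫ ρ f)
          = (hi ≫ ρ f) ≫ coprod.inl := by rw [coprod.inl_map]
        _ = (ρ f ≫ hi) ≫ coprod.inl := by rw [ce_hi]
        _ = ρ f ≫ hi ≫ coprod.inl := by simp only [Category.assoc]
        _ = ρ f ≫ hi ≫ h := by rw [hih]
        _ = (ρ f ≫ hi) ≫ h := by simp only [Category.assoc]
        _ = (hi ≫ ρ f) ≫ h := by rw [ce_hi]
        _ = hi ≫ ρ f ≫ h := by simp only [Category.assoc]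
        _ = coprod.inl ≫ d ≫ ρ f ≫ h := by rw [d_def, coprod.inl_desc_assoc]
    · calc coprod.inr ≫ coprod.map (hi ≫ ρ f) (hj ≫ ρ f)
          = (hj ≫ ρ f) ≫ coprod.inr := by rw [coprod.inr_map]
        _ = (ρ f ≫ hj) ≫ coprod.inr := by rw [ce_hj]
        _ = ρ f ≫ hj ≫ coprod.inr := by simp only [Category.assoc]
        _ = ρ f ≫ hj ≫ h := by rw [hjh]
        _ = (ρ f ≫ hj) ≫ h := by simp only [Category.assoc]
        _ = (hj ≫ ρ f) ≫ h := by rw [ce_hj]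
        _ = hj ≫ ρ f ≫ h := by simp only [Category.assoc]
        _ = coprod.inr ≫ d ≫ ρ f ≫ h := by rw [d_def, coprod.inr_desc_assoc]
  have L : ρ f ≫ h = h ≫ coprod.map (ρ f) (ρ f) := by
    have step : h ≫ coprod.map (ρ f) (ρ f) = h ≫ coprod.map (hi ≫ ρ f) (hj ≫ ρ f) := by
      conv_lhs => rw [← hself]
      rw [Category.assoc, coprod.map_map]
    rw [step, M, ← Category.assoc, hd2, ← Category.assoc, R2 h f, Category.assoc, R1]
  have rfi : ρ (f ≫ (coprod.inl : B ⟶ B ⨿ B)) = ρ f := by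
    rw [← rcr, (htot B B).1, Category.comp_id]
  have rfj : ρ (f ≫ (coprod.inr : B ⟶ B ⨿ B)) = ρ f := by
    rw [← rcr, (htot B B).2, Category.comp_id]
  have rmapff : ρ (coprod.map f f : A ⨿ A ⟶ B ⨿ B) = coprod.map (ρ f) (ρ f) := by
    apply coprod.hom_ext
    · rw [R4, coprod.inl_map, coprod.inl_map, rfi]
    · rw [R4, coprod.inr_map, coprod.inr_map, rfj]
  have part4 : ρ (g ≫ h ≫ coprod.map f f) = ρ (g ≫ h) := by
    calc ρ (g ≫ h ≫ coprod.map f f)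
        = ρ ((g ≫ h) ≫ coprod.map f f) := by simp only [Category.assoc]
      _ = ρ ((g ≫ h) ≫ coprod.map (ρ f) (ρ f)) := by rw [← rcr, rmapff]
      _ = ρ (g ≫ h ≫ coprod.map (ρ f) (ρ f)) := by simp only [Category.assoc]
      _ = ρ (g ≫ ρ f ≫ h) := by rw [← L]
      _ = ρ ((g ≫ ρ f) ≫ h) := by simp only [Category.assoc]
      _ = ρ (g ≫ h) := by rw [ge]
  have mfi : (coprod.map f f : A ⨿ A ⟶ B ⨿ B) ≫ iStar B B = iStar A A ≫ f := by
    apply coprod.hom_ext <;> simp [iStar]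
  have mfj : (coprod.map f f : A ⨿ A ⟶ B ⨿ B) ≫ jStar B B = jStar A A ≫ f := by
    apply coprod.hom_ext <;> simp [jStar]
  have mei : (coprod.map (ρ f) (ρ f) : A ⨿ A ⟶ A ⨿ A) ≫ iStar A A = iStar A A ≫ ρ f := by
    apply coprod.hom_ext <;> simp [iStar]
  have mej : (coprod.map (ρ f) (ρ f) : A ⨿ A ⟶ A ⨿ A) ≫ jStar A A = jStar A A ≫ ρ f := by
    apply coprod.hom_ext <;> simp [jStar]
  have exi : ρ f ≫ h ≫ iStar A A = h ≫ iStar A A ≫ ρ f := by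
    rw [← Category.assoc, L, Category.assoc, mei]
  have exj : ρ f ≫ h ≫ jStar A A = h ≫ jStar A A ≫ ρ f := by
    rw [← Category.assoc, L, Category.assoc, mej]
  set ki := ρ (g ≫ hi) with ki_def
  set kj := ρ (g ≫ hj) with kj_def
  have rki : ρ ki = ki := rr _
  have rkj : ρ kj = kj := rr _
  have kieq : ρ ((g ≫ h ≫ coprod.map f f) ≫ iStar B B) = ki := by
    have e1 : (g ≫ h ≫ coprod.map f f) ≫ iStar B B = g ≫ h ≫ iStar A A ≫ f := by
      simp only [Category.assoc]; rw [mfi]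
    rw [e1, ki_def]
    calc ρ (g ≫ h ≫ iStar A A ≫ f)
        = ρ ((g ≫ h ≫ iStar A A) ≫ f) := by simp only [Category.assoc]
      _ = ρ ((g ≫ h ≫ iStar A A) ≫ ρ f) := by rw [rcr]
      _ = ρ (g ≫ h ≫ iStar A A ≫ ρ f) := by simp only [Category.assoc]
      _ = ρ (g ≫ ρ f ≫ h ≫ iStar A A) := by rw [← exi]
      _ = ρ ((g ≫ ρ f) ≫ h ≫ iStar A A) := by simp only [Category.assoc]
      _ = ρ (g ≫ h ≫ iStar A A) := by rw [ge]
      _ = ρ (g ≫ ρ (h ≫ iStar A A)) := by rw [rcr]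
      _ = ρ (g ≫ hi) := by rw [hi_def]
  have kjeq : ρ ((g ≫ h ≫ coprod.map f f) ≫ jStar B B) = kj := by
    have e1 : (g ≫ h ≫ coprod.map f f) ≫ jStar B B = g ≫ h ≫ jStar A A ≫ f := by
      simp only [Category.assoc]; rw [mfj]
    rw [e1, kj_def]
    calc ρ (g ≫ h ≫ jStar A A ≫ f)
        = ρ ((g ≫ h ≫ jStar A A) ≫ f) := by simp only [Category.assoc]
      _ = ρ ((g ≫ h ≫ jStar A A) ≫ ρ f) := by rw [rcr]
      _ = ρ (g ≫ h ≫ jStar A A ≫ ρ f) := by simp only [Category.assoc]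
      _ = ρ (g ≫ ρ f ≫ h ≫ jStar A A) := by rw [← exj]
      _ = ρ ((g ≫ ρ f) ≫ h ≫ jStar A A) := by simp only [Category.assoc]
      _ = ρ (g ≫ h ≫ jStar A A) := by rw [ge]
      _ = ρ (g ≫ ρ (h ≫ jStar A A)) := by rw [rcr]
      _ = ρ (g ≫ hj) := by rw [hj_def]
  have fki : f ≫ ki = hi ≫ f := by
    calc f ≫ ki = ρ (f ≫ g ≫ hi) ≫ f := by rw [ki_def, R4]
      _ = ρ ((f ≫ g) ≫ hi) ≫ f := by simp only [Category.assoc]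
      _ = ρ (ρ f ≫ hi) ≫ f := by rw [hgf]
      _ = (ρ f ≫ ρ hi) ≫ f := by rw [R3]
      _ = (ρ f ≫ hi) ≫ f := by rw [rhi]
      _ = (hi ≫ ρ f) ≫ f := by rw [ce_hi]
      _ = hi ≫ f := by rw [Category.assoc, R1]
  have fkj : f ≫ kj = hj ≫ f := by
    calc f ≫ kj = ρ (f ≫ g ≫ hj) ≫ f := by rw [kj_def, R4]
      _ = ρ ((f ≫ g) ≫ hj) ≫ f := by simp only [Category.assoc]
      _ = ρ (ρ f ≫ hj) ≫ f := by rw [hgf]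
      _ = (ρ f ≫ ρ hj) ≫ f := by rw [R3]
      _ = (ρ f ≫ hj) ≫ f := by rw [rhj]
      _ = (hj ≫ ρ f) ≫ f := by rw [ce_hj]
      _ = hj ≫ f := by rw [Category.assoc, R1]
  have kig : ki ≫ g = g ≫ hi := by
    have := R4 g hi; rw [rhi] at this; exact this.symm
  have kjg : kj ≫ g = g ≫ hj := by
    have := R4 g hj; rw [rhj] at this; exact this.symm
  have ghif : g ≫ hi ≫ f = ki := by
    calc g ≫ hi ≫ f = (g ≫ hi) ≫ f := by simp only [Category.assoc]
      _ = (ki ≫ g) ≫ f := by rw [kig]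
      _ = ki ≫ ρ g := by rw [Category.assoc, hfg]
      _ = ki := by rw [ki_def]; exact rle g hi
  have ghjf : g ≫ hj ≫ f = kj := by
    calc g ≫ hj ≫ f = (g ≫ hj) ≫ f := by simp only [Category.assoc]
      _ = (kj ≫ g) ≫ f := by rw [kjg]
      _ = kj ≫ ρ g := by rw [Category.assoc, hfg]
      _ = kj := by rw [kj_def]; exact rle g hj
  have mD : (coprod.map f f : A ⨿ A ⟶ B ⨿ B) ≫ coprod.desc ki kj = d ≫ f := by
    apply coprod.hom_ext
    · calc coprod.inl ≫ coprod.map f f ≫ coprod.desc ki kj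
          = f ≫ coprod.inl ≫ coprod.desc ki kj := by
            rw [← Category.assoc, coprod.inl_map, Category.assoc]
        _ = f ≫ ki := by rw [coprod.inl_desc]
        _ = hi ≫ f := fki
        _ = coprod.inl ≫ d ≫ f := by rw [d_def, coprod.inl_desc_assoc]
    · calc coprod.inr ≫ coprod.map f f ≫ coprod.desc ki kj
          = f ≫ coprod.inr ≫ coprod.desc ki kj := by
            rw [← Category.assoc, coprod.inr_map, Category.assoc]
        _ = f ≫ kj := by rw [coprod.inr_desc]
        _ = hj ≫ f := fkj
        _ = coprod.inr ≫ d ≫ f := by rw [d_def, coprod.inr_desc_assoc]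
  refine ⟨⟨?_, ?_, rfl⟩, part4⟩
  · -- D ≫ k = ρ D
    rw [kieq, kjeq, rdesc, rki, rkj]
    apply coprod.hom_ext
    · simp only [Category.assoc, coprod.inl_desc_assoc, coprod.inl_map]
      calc ki ≫ g ≫ h ≫ coprod.map f f
          = (ki ≫ g) ≫ h ≫ coprod.map f f := by simp only [Category.assoc]
        _ = (g ≫ hi) ≫ h ≫ coprod.map f f := by rw [kig]
        _ = g ≫ (hi ≫ h) ≫ coprod.map f f := by simp only [Category.assoc]
        _ = g ≫ (hi ≫ coprod.inl) ≫ coprod.map f f := by rw [hih]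
        _ = g ≫ hi ≫ coprod.inl ≫ coprod.map f f := by simp only [Category.assoc]
        _ = g ≫ hi ≫ f ≫ coprod.inl := by rw [coprod.inl_map]
        _ = (g ≫ hi ≫ f) ≫ coprod.inl := by simp only [Category.assoc]
        _ = ki ≫ coprod.inl := by rw [ghif]
    · simp only [Category.assoc, coprod.inr_desc_assoc, coprod.inr_map]
      calc kj ≫ g ≫ h ≫ coprod.map f f
          = (kj ≫ g) ≫ h ≫ coprod.map f f := by simp only [Category.assoc]
        _ = (g ≫ hj) ≫ h ≫ coprod.map f f := by rw [kjg]
        _ = g ≫ (hj ≫ h) ≫ coprod.map f f := by simp only [Category.assoc]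
        _ = g ≫ (hj ≫ coprod.inr) ≫ coprod.map f f := by rw [hjh]
        _ = g ≫ hj ≫ coprod.inr ≫ coprod.map f f := by simp only [Category.assoc]
        _ = g ≫ hj ≫ f ≫ coprod.inr := by rw [coprod.inr_map]
        _ = (g ≫ hj ≫ f) ≫ coprod.inr := by simp only [Category.assoc]
        _ = kj ≫ coprod.inr := by rw [ghjf]
  · -- k ≫ D = ρ k
    rw [kieq, kjeq, part4]
    have e2 : (g ≫ h ≫ coprod.map f f) ≫ coprod.desc ki kj = g ≫ h ≫ d ≫ f := by
      simp only [Category.assoc]; rw [mD]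
    rw [e2]
    calc g ≫ h ≫ d ≫ f = g ≫ (h ≫ d) ≫ f := by simp only [Category.assoc]
      _ = g ≫ ρ h ≫ f := by rw [hd2]
      _ = (g ≫ ρ h) ≫ f := by simp only [Category.assoc]
      _ = (ρ (g ≫ h) ≫ g) ≫ f := by rw [R4]
      _ = ρ (g ≫ h) ≫ ρ g := by rw [Category.assoc, hfg]
      _ = ρ (g ≫ h) := rle g h
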